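/- The sum over all partitions λ with at most n parts of the dual Grothendieck polynomials g_λ(z_1,…,z_m) equals ∏_{i=1}^m (1 − z_i)^{−n}, as formal power series. -/

import Mathlib

open scoped BigOperators

/-- A plane partition: a finitely supported `ℕ`-array (0-indexed) weakly
decreasing along rows and columns. -/
structure PlanePartition where
  entry : ℕ → ℕ → ℕ
  row_decr : ∀ i j, entry i (j + 1) ≤ entry i j
  col_decr : ∀ i j, entry (i + 1) j ≤ entry i j
  finite_support : {p : ℕ × ℕ | entry p.1 p.2 ≠ 0}.Finite

namespace PlanePartition

/-- `π` has at most `n` (nonzero) rows. -/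
def RowsLE (π : PlanePartition) (n : ℕ) : Prop := ∀ i j, n ≤ i → π.entry i j = 0

/-- `π` has at most `k` (nonzero) columns. -/
def ColsLE (π : PlanePartition) (k : ℕ) : Prop := ∀ i j, k ≤ j → π.entry i j = 0

/-- all entries of `π` are at most `m`. -/
def EntriesLE (π : PlanePartition) (m : ℕ) : Prop := ∀ i j, π.entry i j ≤ m

/-- The descent set of `π` (0-indexed cells). -/
def Des (π : PlanePartition) : Set (ℕ × ℕ) :=
  {p | π.entry (p.1 + 1) p.2 < π.entry p.1 p.2}

/-- number of descents of `π`. -/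
noncomputable def des (π : PlanePartition) : ℕ := π.Des.ncard

/-- `dmat π i ℓ` is the matrix entry `d_{i+1, ℓ+1}` of `Φ(π)`: the number of columns `j`
with `π_{ij} = ℓ+1 > π_{i+1,j}` (here `i`, `ℓ` are 0-indexed). -/
noncomputable def dmat (π : PlanePartition) (i ℓ : ℕ) : ℕ :=
  {j : ℕ | π.entry i j = ℓ + 1 ∧ π.entry (i + 1) j ≤ ℓ}.ncard

/-- the volume `|π|`. -/
noncomputable def vol (π : PlanePartition) : ℕ := ∑ᶠ p : ℕ × ℕ, π.entry p.1 p.2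

/-- the up-hook volume `|π|_{uh} = Σ_{(i,j) ∈ Des(π)} (π_{ij} + i - 1)` (1-indexed `i`;
in our 0-indexed convention the summand is `π.entry p.1 p.2 + p.1`). -/
noncomputable def uhvol (π : PlanePartition) : ℕ :=
  ∑ᶠ p ∈ π.Des, (π.entry p.1 p.2 + p.1)

/-- the corner volume `|π|_c = Σ_{(i,j) ∈ Des(π)} π_{ij}`. -/
noncomputable def cvol (π : PlanePartition) : ℕ :=
  ∑ᶠ p ∈ π.Des, π.entry p.1 p.2

/-- the trace `tr(π) = Σ_i π_{ii}`. -/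
noncomputable def trace (π : PlanePartition) : ℕ := ∑ᶠ i : ℕ, π.entry i i

/-- `colCount π v` is the number of columns of `π` containing the entry `v`. -/
noncomputable def colCount (π : PlanePartition) (v : ℕ) : ℕ :=
  {j : ℕ | ∃ i, π.entry i j = v}.ncard

/-- the length of row `i` (0-indexed) of `π`. -/
noncomputable def rowLen (π : PlanePartition) (i : ℕ) : ℕ :=
  {j : ℕ | π.entry i j ≠ 0}.ncard

/-- `π` is column-strict: entries strictly decrease down the columns (within the shape). -/
def ColStrict (π : PlanePartition) : Prop :=
  ∀ i j, π.entry i j ≠ 0 → π.entry (i + 1) j < π.entry i j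

/-- the shape of `π` is exactly the rectangle with `n` rows and `k` columns. -/
def ShapeRect (π : PlanePartition) (k n : ℕ) : Prop :=
  ∀ i j, π.entry i j ≠ 0 ↔ i < n ∧ j < k

end PlanePartition

/-- The Schur polynomial `s_{(k^n)}` of rectangular shape `(k^n)` in `N` variables
`x 0, …, x (N-1)`, defined via column-strict plane partitions of shape `(k^n)` with
entries at most `N`; the variable `x i` records entries equal to `i + 1`. -/
noncomputable def schurRect {R : Type*} [CommSemiring R] (k n N : ℕ) (x : ℕ → R) : R :=
  ∑ᶠ π ∈ {π : PlanePartition | π.ColStrict ∧ π.ShapeRect k n ∧ π.EntriesLE N},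
    ∏ i ∈ Finset.range N, x i ^ ({p : ℕ × ℕ | π.entry p.1 p.2 = i + 1}.ncard)


open Finset

namespace SGF

/-- `Seq n β`: β is weakly decreasing, bounded by `n`, eventually zero. -/
def Seq (n : ℕ) (β : ℕ → ℕ) : Prop :=
  (∀ c, β (c+1) ≤ β c) ∧ (∀ c, β c ≤ n) ∧ ∃ C, ∀ c, C ≤ c → β c = 0

lemma Seq.anti {n : ℕ} {β : ℕ → ℕ} (h : Seq n β) : Antitone β :=
  antitone_nat_of_succ_le h.1

lemma le_of_forall_lt_imp {x y : ℕ} (h : ∀ c, c < x → c < y) : x ≤ y := by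
  rcases Nat.eq_zero_or_pos x with h0 | h0
  · omega
  · have := h (x - 1) (by omega); omega

lemma nat_eq_of_lt_iff {x y : ℕ} (h : ∀ c, c < x ↔ c < y) : x = y :=
  le_antisymm (le_of_forall_lt_imp fun c hc => (h c).mp hc)
    (le_of_forall_lt_imp fun c hc => (h c).mpr hc)

/-- conjugate: morally `#{c | v ≤ β c}`. -/
noncomputable def conj (β : ℕ → ℕ) (v : ℕ) : ℕ := sInf {c | β c < v}

lemma lt_conj_iff {n : ℕ} {β : ℕ → ℕ} (h : Seq n β) {v : ℕ} (hv : 1 ≤ v) (c : ℕ) :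
    c < conj β v ↔ v ≤ β c := by
  obtain ⟨C, hC⟩ := h.2.2
  have hne : {c | β c < v}.Nonempty := ⟨C, by simp [hC C le_rfl]; omega⟩
  constructor
  · intro hc
    have := Nat.notMem_of_lt_sInf hc
    simpa [Set.mem_setOf_eq, not_lt] using this
  · intro hvc
    by_contra hcon
    push_neg at hcon
    have hmem : β (conj β v) < v := Nat.sInf_mem hne
    have := h.anti hcon
    omega

lemma conj_eq_zero_of_gt {n : ℕ} {β : ℕ → ℕ} (h : Seq n β) {v : ℕ} (hv : n < v) :
    conj β v = 0 := by
  have : conj β v ≤ 0 := le_of_forall_lt_imp fun c hc => by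
    have := (lt_conj_iff h (by omega) c).mp hc
    have := h.2.1 c
    omega
  omega

lemma conj_anti {n : ℕ} {β : ℕ → ℕ} (h : Seq n β) {v : ℕ} (hv : 1 ≤ v) :
    conj β (v+1) ≤ conj β v :=
  le_of_forall_lt_imp fun c hc => by
    have := (lt_conj_iff h (by omega) c).mp hc
    exact (lt_conj_iff h hv c).mpr (by omega)

lemma conj_mono {n : ℕ} {β α : ℕ → ℕ} (hβ : Seq n β) (hα : Seq n α)
    (hle : ∀ c, β c ≤ α c) {v : ℕ} (hv : 1 ≤ v) : conj β v ≤ conj α v :=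
  le_of_forall_lt_imp fun c hc => by
    have := (lt_conj_iff hβ hv c).mp hc
    exact (lt_conj_iff hα hv c).mpr (le_trans this (hle c))

lemma lower_all {P : ℕ → Prop} (h : ∀ w, P (w+1) → P w) {w w' : ℕ} (hw : w ≤ w')
    (hP : P w') : P w := by
  have key : ∀ k, P (w + k) → P w := by
    intro k
    induction k with
    | zero => exact fun hp => hp
    | succ k ih => intro hp; exact ih (h _ hp)
  have : w + (w' - w) = w' := by omega
  exact key (w' - w) (by rwa [this])

lemma card_filter_lower {n : ℕ} {P : ℕ → Prop} [DecidablePred P]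
    (h : ∀ w, P (w+1) → P w) {v : ℕ} (hv : v < n) :
    v + 1 ≤ ((range n).filter P).card ↔ P v := by
  constructor
  · intro hcard
    by_contra hPv
    have hsub : (range n).filter P ⊆ range v := by
      intro w hw
      simp only [mem_filter, mem_range] at hw
      simp only [mem_range]
      by_contra hvw
      push_neg at hvw
      exact hPv (lower_all h hvw hw.2)
    have := card_le_card hsub
    simp only [card_range] at this
    omega
  · intro hPv
    have hsub : range (v+1) ⊆ (range n).filter P := by
      intro w hw
      simp only [mem_range] at hw
      simp only [mem_filter, mem_range]
      exact ⟨by omega, lower_all h (by omega) hPv⟩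
    have := card_le_card hsub
    simpa [card_range] using this

/-- rebuild a sequence from (what will be) its conjugate. -/
noncomputable def fromT (n : ℕ) (t : ℕ → ℕ) (c : ℕ) : ℕ :=
  ((range n).filter fun w => c < t (w+1)).card

lemma le_fromT_iff {n : ℕ} {t : ℕ → ℕ} (ht : ∀ v, t (v+1) ≤ t v) {v : ℕ}
    (hv1 : 1 ≤ v) (hvn : v ≤ n) (c : ℕ) :
    v ≤ fromT n t c ↔ c < t v := by
  classical
  have h := card_filter_lower (n := n) (P := fun w => c < t (w+1))
    (fun w hw => lt_of_lt_of_le hw (ht (w+1))) (v := v - 1) (by omega)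
  have hv' : v - 1 + 1 = v := by omega
  unfold fromT
  simpa only [hv'] using h

lemma seq_eq_fromT_conj {n : ℕ} {β : ℕ → ℕ} (h : Seq n β) (c : ℕ) :
    β c = fromT n (conj β) c := by
  unfold fromT
  have : ((range n).filter fun w => c < conj β (w+1)) = range (β c) := by
    ext w
    simp only [mem_filter, mem_range]
    rw [lt_conj_iff h (by omega) c]
    have := h.2.1 c
    omega
  rw [this, card_range]

end SGF

namespace SGF

/-- downward recursion for the reconstructed conjugate:
`tAux n β a k` is morally `t_{n+1-k}` where `t_v = max (t_{v+1}) (conj β v) + a v`. -/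
noncomputable def tAux (n : ℕ) (β a : ℕ → ℕ) : ℕ → ℕ
  | 0 => 0
  | k+1 => max (tAux n β a k) (conj β (n - k)) + a (n - k)

noncomputable def tval (n : ℕ) (β a : ℕ → ℕ) (v : ℕ) : ℕ := tAux n β a (n + 1 - v)

lemma tAux_mono {n : ℕ} {β a : ℕ → ℕ} : Monotone (tAux n β a) := by
  apply monotone_nat_of_le_succ
  intro k
  show tAux n β a k ≤ max (tAux n β a k) (conj β (n - k)) + a (n - k)
  exact le_trans (le_max_left _ _) (Nat.le_add_right _ _)

lemma tval_succ_le {n : ℕ} {β a : ℕ → ℕ} (v : ℕ) :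
    tval n β a (v+1) ≤ tval n β a v :=
  tAux_mono (by omega)

lemma tval_anti {n : ℕ} {β a : ℕ → ℕ} : Antitone (tval n β a) :=
  antitone_nat_of_succ_le tval_succ_le

lemma tval_eq {n : ℕ} {β a : ℕ → ℕ} {v : ℕ} (hv1 : 1 ≤ v) (hvn : v ≤ n) :
    tval n β a v = max (tval n β a (v+1)) (conj β v) + a v := by
  have h1 : n + 1 - v = (n - v) + 1 := by omega
  have h2 : n - (n - v) = v := by omega
  have h3 : n + 1 - (v + 1) = n - v := by omega
  rw [tval, h1, tAux, h2, tval, h3]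

lemma tval_top {n : ℕ} {β a : ℕ → ℕ} {v : ℕ} (hv : n + 1 ≤ v) : tval n β a v = 0 := by
  have : n + 1 - v = 0 := by omega
  rw [tval, this, tAux]

lemma conj_le_tval {n : ℕ} {β a : ℕ → ℕ} (h : Seq n β) {v : ℕ} (hv : 1 ≤ v) :
    conj β v ≤ tval n β a v := by
  rcases le_or_gt v n with hvn | hvn
  · rw [tval_eq hv hvn]
    exact le_trans (le_max_right _ _) (Nat.le_add_right _ _)
  · rw [conj_eq_zero_of_gt h hvn]
    omega

noncomputable def stepSeq (n : ℕ) (β a : ℕ → ℕ) : ℕ → ℕ := fromT n (tval n β a)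

lemma stepSeq_le_n {n : ℕ} (β a : ℕ → ℕ) (c : ℕ) : stepSeq n β a c ≤ n := by
  unfold stepSeq fromT
  exact le_trans (card_filter_le _ _) (by simp)

lemma stepSeq_seq {n : ℕ} {β a : ℕ → ℕ} (h : Seq n β) : Seq n (stepSeq n β a) := by
  refine ⟨?_, stepSeq_le_n β a, ⟨tval n β a 1, ?_⟩⟩
  · intro c
    unfold stepSeq fromT
    apply card_le_card
    intro w hw
    simp only [mem_filter, mem_range] at hw ⊢
    exact ⟨hw.1, by omega⟩
  · intro c hc
    unfold stepSeq fromT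
    rw [card_eq_zero, filter_eq_empty_iff]
    intro w _
    have : tval n β a (w+1) ≤ tval n β a 1 := tval_anti (by omega)
    omega

lemma le_stepSeq {n : ℕ} {β a : ℕ → ℕ} (h : Seq n β) (c : ℕ) :
    β c ≤ stepSeq n β a c := by
  rw [seq_eq_fromT_conj h c]
  unfold stepSeq fromT
  apply card_le_card
  intro w hw
  simp only [mem_filter, mem_range] at hw ⊢
  exact ⟨hw.1, lt_of_lt_of_le hw.2 (conj_le_tval h (by omega))⟩

lemma conj_stepSeq {n : ℕ} {β a : ℕ → ℕ} (h : Seq n β) {v : ℕ} (hv : 1 ≤ v) :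
    conj (stepSeq n β a) v = tval n β a v := by
  apply nat_eq_of_lt_iff
  intro c
  rw [lt_conj_iff (stepSeq_seq h) hv c]
  rcases le_or_gt v n with hvn | hvn
  · show v ≤ fromT n (tval n β a) c ↔ _
    exact le_fromT_iff tval_succ_le hv hvn c
  · rw [tval_top (by omega)]
    have := stepSeq_le_n (n := n) β a c
    constructor <;> intro h' <;> omega

/-- the set of strict columns at level `v` is an interval. -/
lemma strict_level_eq_Ico {n : ℕ} {β α : ℕ → ℕ} (hβ : Seq n β) (hα : Seq n α)
    (hle : ∀ c, β c ≤ α c) {v : ℕ} (hv : 1 ≤ v) :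
    {c | β c < α c ∧ α c = v} = Set.Ico (max (conj α (v+1)) (conj β v)) (conj α v) := by
  ext c
  simp only [Set.mem_setOf_eq, Set.mem_Ico, max_le_iff]
  have h1 := lt_conj_iff hα hv c
  have h2 := lt_conj_iff hα (v := v + 1) (by omega) c
  have h3 := lt_conj_iff hβ hv c
  constructor
  · rintro ⟨hs, hval⟩
    refine ⟨⟨?_, ?_⟩, h1.mpr (by omega)⟩
    · by_contra hcon
      push_neg at hcon
      have := h2.mp hcon
      omega
    · by_contra hcon
      push_neg at hcon
      have := h3.mp hcon
      omega
  · rintro ⟨⟨hc1, hc2⟩, hc3⟩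
    have hv1 : v ≤ α c := h1.mp hc3
    have hv2 : ¬ (v + 1 ≤ α c) := fun hcon => by
      have := h2.mpr hcon; omega
    have hv3 : ¬ (v ≤ β c) := fun hcon => by
      have := h3.mpr hcon; omega
    omega

lemma max_conj_le {n : ℕ} {β α : ℕ → ℕ} (hβ : Seq n β) (hα : Seq n α)
    (hle : ∀ c, β c ≤ α c) {v : ℕ} (hv : 1 ≤ v) :
    max (conj α (v+1)) (conj β v) ≤ conj α v :=
  max_le (conj_anti hα hv) (conj_mono hβ hα hle hv)

lemma strict_level_ncard {n : ℕ} {β α : ℕ → ℕ} (hβ : Seq n β) (hα : Seq n α)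
    (hle : ∀ c, β c ≤ α c) {v : ℕ} (hv : 1 ≤ v) :
    {c | β c < α c ∧ α c = v}.ncard
      = conj α v - max (conj α (v+1)) (conj β v) := by
  rw [strict_level_eq_Ico hβ hα hle hv, ← Finset.coe_Ico, Set.ncard_coe_finset,
    Nat.card_Ico]

lemma strict_level_empty {n : ℕ} {β α : ℕ → ℕ} (hα : Seq n α) {v : ℕ}
    (hv : v = 0 ∨ n < v) :
    {c | β c < α c ∧ α c = v} = (∅ : Set ℕ) := by
  ext c
  simp only [Set.mem_setOf_eq, Set.mem_empty_iff_false, iff_false, not_and]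
  intro h1 h2
  have := hα.2.1 c
  omega

/-- uniqueness: `stepSeq` recovers `α` from `β` and the strict-level counts. -/
lemma stepSeq_eq {n : ℕ} {β α a : ℕ → ℕ} (hβ : Seq n β) (hα : Seq n α)
    (hle : ∀ c, β c ≤ α c)
    (ha : ∀ v, a v = {c | β c < α c ∧ α c = v}.ncard) :
    stepSeq n β a = α := by
  have hrec : ∀ v, 1 ≤ v → v ≤ n →
      conj α v = max (conj α (v+1)) (conj β v) + a v := by
    intro v h1 hn
    rw [ha v, strict_level_ncard hβ hα hle h1]
    have := max_conj_le hβ hα hle (v := v) h1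
    omega
  have main : ∀ k, k ≤ n → tval n β a (n + 1 - k) = conj α (n + 1 - k) := by
    intro k
    induction k with
    | zero =>
      intro _
      simp only [Nat.sub_zero]
      rw [tval_top (le_refl _), conj_eq_zero_of_gt hα (by omega)]
    | succ k ih =>
      intro hk
      have hv1 : 1 ≤ n - k := by omega
      have heq : n + 1 - (k + 1) = n - k := by omega
      have heq2 : n - k + 1 = n + 1 - k := by omega
      rw [heq, tval_eq hv1 (by omega), heq2, ih (by omega), ← heq2,
        hrec (n - k) hv1 (by omega)]
  have key : ∀ v, 1 ≤ v → tval n β a v = conj α v := by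
    intro v hv
    rcases le_or_gt v (n + 1) with hvn | hvn
    · have : v = n + 1 - (n + 1 - v) := by omega
      rw [this]
      exact main (n + 1 - v) (by omega)
    · rw [tval_top (by omega), conj_eq_zero_of_gt hα (by omega)]
  funext c
  rw [seq_eq_fromT_conj hα c]
  unfold stepSeq fromT
  congr 1
  apply filter_congr
  intro w _
  rw [key (w+1) (by omega)]

/-- existence: counts of `stepSeq` levels recover `a`. -/
lemma count_stepSeq {n : ℕ} {β a : ℕ → ℕ} (hβ : Seq n β) {v : ℕ}
    (hv1 : 1 ≤ v) (hvn : v ≤ n) :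
    {c | β c < stepSeq n β a c ∧ stepSeq n β a c = v}.ncard = a v := by
  rw [strict_level_ncard hβ (stepSeq_seq hβ) (le_stepSeq hβ) hv1,
    conj_stepSeq hβ hv1, conj_stepSeq hβ (by omega : 1 ≤ v + 1),
    tval_eq hv1 hvn]
  omega

end SGF

namespace SGF

open PlanePartition

lemma entry_anti_col (π : PlanePartition) (c : ℕ) : Antitone (fun i => π.entry i c) :=
  antitone_nat_of_succ_le (fun i => π.col_decr i c)

lemma entry_anti_row (π : PlanePartition) (i : ℕ) : Antitone (fun c => π.entry i c) :=
  antitone_nat_of_succ_le (fun c => π.row_decr i c)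

lemma col_ev0 (π : PlanePartition) (c : ℕ) : ∃ C, ∀ i, C ≤ i → π.entry i c = 0 := by
  have hinj : Set.InjOn (fun i => (i, c)) ((fun i => (i, c)) ⁻¹' {p : ℕ × ℕ | π.entry p.1 p.2 ≠ 0}) := by
    intro a _ b _ hab
    simpa using hab
  have hfin := Set.Finite.preimage hinj π.finite_support
  obtain ⟨C, hC⟩ := hfin.bddAbove
  refine ⟨C + 1, fun i hi => ?_⟩
  by_contra hcon
  have : i ∈ (fun i => (i, c)) ⁻¹' {p : ℕ × ℕ | π.entry p.1 p.2 ≠ 0} := hcon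
  have := hC this
  omega

lemma col_bound_uniform (π : PlanePartition) : ∃ C, ∀ i c, C ≤ c → π.entry i c = 0 := by
  have hfin : {c : ℕ | ∃ i, π.entry i c ≠ 0}.Finite := by
    apply Set.Finite.subset (π.finite_support.image Prod.snd)
    rintro c ⟨i, hi⟩
    exact ⟨(i, c), hi, rfl⟩
  obtain ⟨C, hC⟩ := hfin.bddAbove
  refine ⟨C + 1, fun i c hc => ?_⟩
  by_contra hcon
  have : c ∈ {c : ℕ | ∃ i, π.entry i c ≠ 0} := ⟨i, hcon⟩
  have := hC this
  omega

/-- each column of a plane partition is a `Seq` (bounded by its top entry). -/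
lemma col_seq (π : PlanePartition) (c : ℕ) : Seq (π.entry 0 c) (fun i => π.entry i c) :=
  ⟨fun i => π.col_decr i c, fun i => entry_anti_col π c (Nat.zero_le i), col_ev0 π c⟩

/-- `colLen π j c` : number of entries `≥ j+1` in column `c`. -/
noncomputable def colLen (π : PlanePartition) (j c : ℕ) : ℕ :=
  conj (fun i => π.entry i c) (j + 1)

lemma lt_colLen_iff (π : PlanePartition) (j c i : ℕ) :
    i < colLen π j c ↔ j + 1 ≤ π.entry i c :=
  lt_conj_iff (col_seq π c) (by omega) i

lemma colLen_anti_c (π : PlanePartition) (j c : ℕ) :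
    colLen π j (c + 1) ≤ colLen π j c :=
  le_of_forall_lt_imp fun i hi => by
    rw [lt_colLen_iff] at hi ⊢
    exact le_trans hi (π.row_decr i c)

lemma colLen_anti_j (π : PlanePartition) (j c : ℕ) :
    colLen π (j + 1) c ≤ colLen π j c :=
  le_of_forall_lt_imp fun i hi => by
    rw [lt_colLen_iff] at hi ⊢
    omega

lemma colLen_le {π : PlanePartition} {n : ℕ} (hrows : π.RowsLE n) (j c : ℕ) :
    colLen π j c ≤ n :=
  le_of_forall_lt_imp fun i hi => by
    rw [lt_colLen_iff] at hi
    by_contra hcon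
    push_neg at hcon
    rw [hrows i c hcon] at hi
    omega

lemma colLen_zero_of_entries {π : PlanePartition} {m : ℕ} (hent : π.EntriesLE m)
    {j : ℕ} (hj : m ≤ j) (c : ℕ) : colLen π j c = 0 := by
  have : colLen π j c ≤ 0 := le_of_forall_lt_imp fun i hi => by
    rw [lt_colLen_iff] at hi
    have := hent i c
    omega
  omega

lemma colLen_ev0 (π : PlanePartition) (j : ℕ) :
    ∃ C, ∀ c, C ≤ c → colLen π j c = 0 := by
  obtain ⟨C, hC⟩ := col_bound_uniform π
  refine ⟨C, fun c hc => ?_⟩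
  have : colLen π j c ≤ 0 := le_of_forall_lt_imp fun i hi => by
    rw [lt_colLen_iff, hC i c hc] at hi
    omega
  omega

lemma colLen_seq {π : PlanePartition} {n : ℕ} (hrows : π.RowsLE n) (j : ℕ) :
    Seq n (fun c => colLen π j c) :=
  ⟨fun c => colLen_anti_c π j c, fun c => colLen_le hrows j c, colLen_ev0 π j⟩

lemma entry_eq_card {π : PlanePartition} {m : ℕ} (hent : π.EntriesLE m) (i c : ℕ) :
    π.entry i c = ((range m).filter fun j => i < colLen π j c).card := by
  have : ((range m).filter fun j => i < colLen π j c) = range (π.entry i c) := by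
    ext j
    simp only [mem_filter, mem_range]
    rw [lt_colLen_iff]
    have := hent i c
    omega
  rw [this, card_range]

lemma colCount_set_eq (π : PlanePartition) (j : ℕ) :
    {c : ℕ | ∃ i, π.entry i c = j + 1}
      = {c : ℕ | colLen π (j + 1) c < colLen π j c} := by
  ext c
  simp only [Set.mem_setOf_eq]
  constructor
  · rintro ⟨i, hi⟩
    have h1 : i < colLen π j c := by rw [lt_colLen_iff]; omega
    have h2 : ¬ (i < colLen π (j + 1) c) := by rw [lt_colLen_iff]; omega
    omega
  · intro hlt
    refine ⟨colLen π (j + 1) c, ?_⟩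
    have h1 : colLen π (j + 1) c < colLen π j c := hlt
    have h2 := (lt_colLen_iff π j c (colLen π (j + 1) c)).mp h1
    have h3 : ¬ (colLen π (j + 1) c < colLen π (j + 1) c) := lt_irrefl _
    rw [lt_colLen_iff] at h3
    omega

lemma strictFinite (π : PlanePartition) (j : ℕ) :
    {c : ℕ | colLen π (j + 1) c < colLen π j c}.Finite := by
  obtain ⟨C, hC⟩ := colLen_ev0 π j
  apply Set.Finite.subset (Set.finite_Iio C)
  intro c hc
  simp only [Set.mem_setOf_eq] at hc
  simp only [Set.mem_Iio]
  by_contra hcon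
  push_neg at hcon
  rw [hC c hcon] at hc
  omega

noncomputable def strictFinset (π : PlanePartition) (j : ℕ) : Finset ℕ :=
  (strictFinite π j).toFinset

/-- the multiset of column lengths over strict columns at level `j+1`. -/
noncomputable def Fmul (π : PlanePartition) (j : ℕ) : Multiset ℕ :=
  (strictFinset π j).val.map (fun c => colLen π j c)

lemma count_Fmul (π : PlanePartition) (j v : ℕ) :
    (Fmul π j).count v
      = {c : ℕ | colLen π (j + 1) c < colLen π j c ∧ colLen π j c = v}.ncard := by
  classical
  rw [Fmul, Multiset.count_map]
  have hset : {c : ℕ | colLen π (j + 1) c < colLen π j c ∧ colLen π j c = v}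
      = ↑((strictFinset π j).filter (fun c => v = colLen π j c)) := by
    ext c
    simp only [Set.mem_setOf_eq, Finset.coe_filter, Finset.mem_coe, strictFinset, Set.Finite.mem_toFinset, Set.mem_setOf_eq]
    constructor
    · rintro ⟨h1, h2⟩; exact ⟨h1, h2.symm⟩
    · rintro ⟨h1, h2⟩; exact ⟨h1, h2.symm⟩
  rw [hset, Set.ncard_coe_finset]
  rfl

lemma card_Fmul (π : PlanePartition) (j : ℕ) :
    Multiset.card (Fmul π j) = π.colCount (j + 1) := by
  rw [Fmul, Multiset.card_map]
  show (strictFinset π j).card = _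
  rw [PlanePartition.colCount, colCount_set_eq π j, strictFinset,
    ← Set.ncard_coe_finset, Set.Finite.coe_toFinset]

end SGF

namespace SGF

/-- iterated reconstruction: `NrecF n m a k` is the level function `N_{m-k}`. -/
noncomputable def NrecF (n m : ℕ) (a : ℕ → ℕ → ℕ) : ℕ → (ℕ → ℕ)
  | 0 => fun _ => 0
  | k+1 => stepSeq n (NrecF n m a k) (a (m - (k+1)))

noncomputable def Nfun (n m : ℕ) (a : ℕ → ℕ → ℕ) (j : ℕ) : ℕ → ℕ :=
  NrecF n m a (m - j)

lemma NrecF_seq (n m : ℕ) (a : ℕ → ℕ → ℕ) : ∀ k, Seq n (NrecF n m a k) := by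
  intro k
  induction k with
  | zero => exact ⟨fun c => le_rfl, fun c => Nat.zero_le n, ⟨0, fun c _ => rfl⟩⟩
  | succ k ih => exact stepSeq_seq ih

lemma Nfun_seq (n m : ℕ) (a : ℕ → ℕ → ℕ) (j : ℕ) : Seq n (Nfun n m a j) :=
  NrecF_seq n m a _

lemma Nfun_top (n m : ℕ) (a : ℕ → ℕ → ℕ) {j : ℕ} (hj : m ≤ j) :
    Nfun n m a j = fun _ => 0 := by
  unfold Nfun
  have : m - j = 0 := by omega
  rw [this]
  rfl

lemma Nfun_succ (n m : ℕ) (a : ℕ → ℕ → ℕ) {j : ℕ} (hj : j < m) :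
    Nfun n m a j = stepSeq n (Nfun n m a (j + 1)) (a j) := by
  unfold Nfun
  have h1 : m - j = (m - (j + 1)) + 1 := by omega
  rw [h1]
  show stepSeq n _ (a (m - (m - (j+1) + 1))) = _
  have h2 : m - (m - (j + 1) + 1) = j := by omega
  rw [h2]

lemma Nfun_mono_j (n m : ℕ) (a : ℕ → ℕ → ℕ) (j c : ℕ) :
    Nfun n m a (j + 1) c ≤ Nfun n m a j c := by
  rcases lt_or_ge j m with hj | hj
  · rw [Nfun_succ n m a hj]
    exact le_stepSeq (Nfun_seq n m a (j + 1)) c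
  · rw [Nfun_top n m a hj, Nfun_top n m a (by omega : m ≤ j + 1)]

lemma Nfun_le_zero (n m : ℕ) (a : ℕ → ℕ → ℕ) (j c : ℕ) :
    Nfun n m a j c ≤ Nfun n m a 0 c := by
  induction j with
  | zero => exact le_rfl
  | succ j ih => exact le_trans (Nfun_mono_j n m a j c) ih

noncomputable def entryF (n m : ℕ) (a : ℕ → ℕ → ℕ) (i c : ℕ) : ℕ :=
  ((range m).filter fun j => i < Nfun n m a j c).card

/-- the reconstructed plane partition. -/
noncomputable def mkPP (n m : ℕ) (a : ℕ → ℕ → ℕ) : PlanePartition where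
  entry := entryF n m a
  row_decr := by
    intro i c
    apply card_le_card
    intro j hj
    simp only [mem_filter, mem_range] at hj ⊢
    exact ⟨hj.1, lt_of_lt_of_le hj.2 ((Nfun_seq n m a j).1 c)⟩
  col_decr := by
    intro i c
    apply card_le_card
    intro j hj
    simp only [mem_filter, mem_range] at hj ⊢
    exact ⟨hj.1, by omega⟩
  finite_support := by
    obtain ⟨C, hC⟩ := (Nfun_seq n m a 0).2.2
    apply Set.Finite.subset ((Set.finite_Iio n).prod (Set.finite_Iio C))
    rintro ⟨i, c⟩ hp
    simp only [Set.mem_setOf_eq] at hp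
    have hne : ((range m).filter fun j => i < Nfun n m a j c).Nonempty := by
      rw [← card_pos]
      exact Nat.pos_of_ne_zero hp
    obtain ⟨j, hj⟩ := hne
    simp only [mem_filter, mem_range] at hj
    constructor
    · have := (Nfun_seq n m a j).2.1 c
      simp only [Set.mem_Iio]
      omega
    · simp only [Set.mem_Iio]
      by_contra hcon
      push_neg at hcon
      have h0 := hC c hcon
      have := Nfun_le_zero n m a j c
      omega

lemma mkPP_entriesLE (n m : ℕ) (a : ℕ → ℕ → ℕ) : (mkPP n m a).EntriesLE m := by
  intro i c
  show ((range m).filter fun j => i < Nfun n m a j c).card ≤ m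
  exact le_trans (card_filter_le _ _) (by simp)

lemma mkPP_rowsLE (n m : ℕ) (a : ℕ → ℕ → ℕ) : (mkPP n m a).RowsLE n := by
  intro i c hi
  show ((range m).filter fun j => i < Nfun n m a j c).card = 0
  rw [card_eq_zero, filter_eq_empty_iff]
  intro j _
  have := (Nfun_seq n m a j).2.1 c
  omega

lemma colLen_mkPP (n m : ℕ) (a : ℕ → ℕ → ℕ) (j c : ℕ) :
    colLen (mkPP n m a) j c = Nfun n m a j c := by
  rcases lt_or_ge j m with hj | hj
  · apply nat_eq_of_lt_iff
    intro i
    rw [lt_colLen_iff]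
    show j + 1 ≤ ((range m).filter fun j' => i < Nfun n m a j' c).card ↔ _
    exact card_filter_lower
      (fun j' hj' => lt_of_lt_of_le hj' (Nfun_mono_j n m a j' c)) hj
  · rw [Nfun_top n m a hj,
      colLen_zero_of_entries (mkPP_entriesLE n m a) hj c]

/-- existence direction: `Fmul` of the reconstruction recovers the prescribed counts,
provided the counts are supported on values in `[1, n]`. -/
lemma Fmul_mkPP (n m : ℕ) (a : ℕ → ℕ → ℕ) {j : ℕ} (hj : j < m)
    (ha : ∀ v, (v = 0 ∨ n < v) → a j v = 0) (v : ℕ) :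
    (Fmul (mkPP n m a) j).count v = a j v := by
  rw [count_Fmul]
  have hrw : {c : ℕ | colLen (mkPP n m a) (j+1) c < colLen (mkPP n m a) j c
        ∧ colLen (mkPP n m a) j c = v}
      = {c : ℕ | Nfun n m a (j+1) c < Nfun n m a j c ∧ Nfun n m a j c = v} := by
    ext c
    simp only [Set.mem_setOf_eq, colLen_mkPP]
  rw [hrw]
  rcases (by omega : (1 ≤ v ∧ v ≤ n) ∨ (v = 0 ∨ n < v)) with ⟨h1, h2⟩ | h
  · conv_lhs => rw [Nfun_succ n m a hj]
    exact count_stepSeq (Nfun_seq n m a (j+1)) h1 h2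
  · rw [strict_level_empty (Nfun_seq n m a j) h, Set.ncard_empty, ha v h]

/-- uniqueness direction: reconstruction from the counts of `π` recovers `colLen π`. -/
lemma Nfun_eq_colLen {π : PlanePartition} {n m : ℕ} (hrows : π.RowsLE n)
    (hent : π.EntriesLE m) {a : ℕ → ℕ → ℕ}
    (ha : ∀ j v, j < m → a j v
        = {c : ℕ | colLen π (j+1) c < colLen π j c ∧ colLen π j c = v}.ncard) :
    ∀ j, Nfun n m a j = fun c => colLen π j c := by
  have main : ∀ k, k ≤ m → Nfun n m a (m - k) = fun c => colLen π (m - k) c := by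
    intro k
    induction k with
    | zero =>
      intro _
      simp only [Nat.sub_zero]
      rw [Nfun_top n m a le_rfl]
      funext c
      rw [colLen_zero_of_entries hent le_rfl c]
    | succ k ih =>
      intro hk
      have hj : m - (k + 1) < m := by omega
      have hj1 : m - (k + 1) + 1 = m - k := by omega
      rw [Nfun_succ n m a hj, hj1, ih (by omega)]
      apply stepSeq_eq (colLen_seq hrows (m - k)) (colLen_seq hrows (m - (k+1)))
        (fun c => by rw [← hj1]; exact colLen_anti_j π _ c)
      intro v
      rw [ha _ v hj, hj1]
  intro j
  rcases le_or_gt j m with hj | hj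
  · have : j = m - (m - j) := by omega
    rw [this]
    exact main (m - j) (by omega)
  · rw [Nfun_top n m a (by omega)]
    funext c
    rw [colLen_zero_of_entries hent (by omega) c]

lemma PlanePartition.ext' {π₁ π₂ : PlanePartition} (h : π₁.entry = π₂.entry) :
    π₁ = π₂ := by
  cases π₁; cases π₂; cases h; rfl

end SGF

namespace SGF

/-- multisets with bounded elements are `Sym`s of the interval. -/
noncomputable def multisetBoundedEquiv (n k : ℕ) :
    {A : Multiset ℕ // Multiset.card A = k ∧ ∀ x ∈ A, x ∈ Finset.Icc 1 n}
      ≃ Sym {y : ℕ // y ∈ Finset.Icc 1 n} k where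
  toFun A := ⟨A.1.attach.map (fun x => (⟨x.1, A.2.2 x.1 x.2⟩ : {y : ℕ // y ∈ Finset.Icc 1 n})),
    by rw [Multiset.card_map, Multiset.card_attach]; exact A.2.1⟩
  invFun S := ⟨S.1.map Subtype.val,
    by rw [Multiset.card_map]; exact S.2,
    by intro x hx; obtain ⟨y, hy, rfl⟩ := Multiset.mem_map.mp hx; exact y.2⟩
  left_inv A := by
    apply Subtype.ext
    show Multiset.map _ (Multiset.map _ _) = _
    rw [Multiset.map_map]
    exact Multiset.attach_map_val A.1
  right_inv S := by
    apply Subtype.ext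
    apply Multiset.map_injective (Subtype.val_injective)
    show Multiset.map _ (Multiset.map _ _) = _
    rw [Multiset.map_map]
    exact Multiset.attach_map_val (Multiset.map Subtype.val S.1)

noncomputable def aOf (m : ℕ) (g : Fin m → Multiset ℕ) : ℕ → ℕ → ℕ :=
  fun j v => if h : j < m then (g ⟨j, h⟩).count v else 0

theorem card_PP (n m : ℕ) (e : Fin m →₀ ℕ) :
    Nat.card {π : PlanePartition // π.RowsLE n ∧ π.EntriesLE m ∧
      ∀ j : Fin m, π.colCount ((j : ℕ) + 1) = e j}
    = ∏ j : Fin m, Nat.multichoose n (e j) := by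
  classical
  have E1 : {π : PlanePartition // π.RowsLE n ∧ π.EntriesLE m ∧
        ∀ j : Fin m, π.colCount ((j : ℕ) + 1) = e j}
      ≃ {g : Fin m → Multiset ℕ //
        ∀ j : Fin m, Multiset.card (g j) = e j ∧ ∀ x ∈ g j, x ∈ Finset.Icc 1 n} := by
    refine ⟨fun p => ⟨fun j => Fmul p.1 (j : ℕ), ?_⟩,
      fun t => ⟨mkPP n m (aOf m t.1), ?_⟩, ?_, ?_⟩
    · intro j
      obtain ⟨π, hrows, hent, hcc⟩ := p
      constructor
      · rw [card_Fmul]; exact hcc j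
      · intro x hx
        obtain ⟨c, hc, rfl⟩ := Multiset.mem_map.mp hx
        have hc' : c ∈ strictFinset π (j : ℕ) := hc
        rw [strictFinset, Set.Finite.mem_toFinset] at hc'
        simp only [Set.mem_setOf_eq] at hc'
        have := colLen_le hrows (j : ℕ) c
        simp only [Finset.mem_Icc]
        omega
    · obtain ⟨g, hg⟩ := t
      have ha0 : ∀ (j : ℕ), j < m → ∀ v, (v = 0 ∨ n < v) → aOf m g j v = 0 := by
        intro j hj v hv
        rw [aOf]
        rw [dif_pos hj]
        apply Multiset.count_eq_zero_of_notMem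
        intro hmem
        have := (hg ⟨j, hj⟩).2 v hmem
        simp only [Finset.mem_Icc] at this
        omega
      have hFg : ∀ j : Fin m, Fmul (mkPP n m (aOf m g)) (j : ℕ) = g j := by
        intro j
        ext v
        rw [Fmul_mkPP n m (aOf m g) j.2 (ha0 (j : ℕ) j.2) v, aOf, dif_pos j.2]
      refine ⟨mkPP_rowsLE n m _, mkPP_entriesLE n m _, ?_⟩
      intro j
      rw [← card_Fmul, hFg j, (hg j).1]
    · intro p
      obtain ⟨π, hrows, hent, hcc⟩ := p
      apply Subtype.ext
      apply PlanePartition.ext'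
      have hN := Nfun_eq_colLen hrows hent
        (a := aOf m (fun j : Fin m => Fmul π (j : ℕ)))
        (fun j v hj => by
          rw [aOf, dif_pos hj]
          exact count_Fmul π j v)
      funext i c
      show entryF n m _ i c = π.entry i c
      rw [entryF]
      have : ((range m).filter fun j => i < Nfun n m (aOf m (fun j : Fin m => Fmul π (j : ℕ))) j c)
          = ((range m).filter fun j => i < colLen π j c) := by
        apply filter_congr
        intro j _
        rw [hN j]
      rw [this, ← entry_eq_card hent]
    · intro t
      obtain ⟨g, hg⟩ := t
      apply Subtype.ext
      funext j
      show Fmul (mkPP n m (aOf m g)) (j : ℕ) = g j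
      have ha0 : ∀ (j : ℕ), j < m → ∀ v, (v = 0 ∨ n < v) → aOf m g j v = 0 := by
        intro j hj v hv
        rw [aOf, dif_pos hj]
        apply Multiset.count_eq_zero_of_notMem
        intro hmem
        have := (hg ⟨j, hj⟩).2 v hmem
        simp only [Finset.mem_Icc] at this
        omega
      ext v
      rw [Fmul_mkPP n m (aOf m g) j.2 (ha0 (j : ℕ) j.2) v, aOf, dif_pos j.2]
  rw [Nat.card_congr E1]
  rw [Nat.card_congr (Equiv.subtypePiEquivPi
    (p := fun (j : Fin m) (A : Multiset ℕ) =>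
      Multiset.card A = e j ∧ ∀ x ∈ A, x ∈ Finset.Icc 1 n))]
  rw [Nat.card_pi]
  apply Finset.prod_congr rfl
  intro j _
  rw [Nat.card_congr (multisetBoundedEquiv n (e j))]
  rw [Nat.card_eq_fintype_card, Sym.card_sym_eq_multichoose]
  congr 1
  rw [Fintype.card_coe, Nat.card_Icc]
  omega

end SGF

namespace SGF

open MvPowerSeries

/-- the series `(1 - X j)^{-n}` written down explicitly. -/
noncomputable def G (m n : ℕ) (j : Fin m) : MvPowerSeries (Fin m) ℚ :=
  fun d => if ∀ i, i ≠ j → d i = 0 then (Nat.multichoose n (d j) : ℚ) else 0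

lemma coeff_G (m n : ℕ) (j : Fin m) (d : Fin m →₀ ℕ) :
    MvPowerSeries.coeff d (G m n j)
      = if ∀ i, i ≠ j → d i = 0 then (Nat.multichoose n (d j) : ℚ) else 0 := rfl

lemma one_sub_X_mul_G (m n : ℕ) (j : Fin m) :
    (1 - MvPowerSeries.X j : MvPowerSeries (Fin m) ℚ) * G m (n + 1) j = G m n j := by
  ext d
  rw [sub_mul, one_mul, map_sub]
  rw [show (MvPowerSeries.X j : MvPowerSeries (Fin m) ℚ)
      = MvPowerSeries.monomial (Finsupp.single j 1) 1 from rfl]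
  rw [MvPowerSeries.coeff_monomial_mul, coeff_G m (n+1) j d, coeff_G m n j d]
  by_cases hd : ∀ i, i ≠ j → d i = 0
  · rw [if_pos hd, if_pos hd]
    rcases Nat.eq_zero_or_pos (d j) with h0 | h0
    · have hnle : ¬ (Finsupp.single j 1 ≤ d) := by
        rw [Finsupp.single_le_iff]
        omega
      rw [if_neg hnle, h0]
      simp [Nat.multichoose_zero_right]
    · have hle : Finsupp.single j 1 ≤ d := by
        rw [Finsupp.single_le_iff]
        omega
      rw [if_pos hle, one_mul, coeff_G m (n+1) j (d - Finsupp.single j 1)]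
      have hd' : ∀ i, i ≠ j → (d - Finsupp.single j 1 : Fin m →₀ ℕ) i = 0 := by
        intro i hi
        rw [Finsupp.tsub_apply, hd i hi]
        simp
      rw [if_pos hd']
      have hval : (d - Finsupp.single j 1 : Fin m →₀ ℕ) j = d j - 1 := by
        rw [Finsupp.tsub_apply, Finsupp.single_eq_same]
      rw [hval]
      obtain ⟨k, hk⟩ : ∃ k, d j = k + 1 := ⟨d j - 1, by omega⟩
      rw [hk]
      simp only [Nat.add_sub_cancel]
      have := Nat.multichoose_succ_succ n k
      push_cast [this]
      ring
  · rw [if_neg hd, if_neg hd]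
    push_neg at hd
    obtain ⟨i, hi, hdi⟩ := hd
    by_cases hle : Finsupp.single j 1 ≤ d
    · rw [if_pos hle, one_mul, coeff_G m (n+1) j (d - Finsupp.single j 1)]
      have : ¬ (∀ i', i' ≠ j → (d - Finsupp.single j 1 : Fin m →₀ ℕ) i' = 0) := by
        push_neg
        refine ⟨i, hi, ?_⟩
        rw [Finsupp.tsub_apply, Finsupp.single_eq_of_ne hi]
        omega
      rw [if_neg this]
      ring
    · rw [if_neg hle]
      ring

lemma G_zero (m : ℕ) (j : Fin m) : G m 0 j = 1 := by
  ext d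
  rw [coeff_G, MvPowerSeries.coeff_one]
  by_cases hd : ∀ i, i ≠ j → d i = 0
  · rw [if_pos hd]
    rcases Nat.eq_zero_or_pos (d j) with h0 | h0
    · have : d = 0 := by
        ext i
        by_cases hij : i = j
        · rw [hij]; exact h0
        · exact hd i hij
      rw [if_pos this, h0]
      simp [Nat.multichoose_zero_right]
    · have : ¬ (d = 0) := by
        intro h
        rw [h] at h0
        simp at h0
      rw [if_neg this]
      obtain ⟨k, hk⟩ : ∃ k, d j = k + 1 := ⟨d j - 1, by omega⟩
      rw [hk]
      simp [Nat.multichoose_zero_succ]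
  · rw [if_neg hd]
    have : ¬ (d = 0) := by
      intro h
      apply hd
      intro i _
      rw [h]
      rfl
    rw [if_neg this]

lemma one_sub_X_pow_mul_G (m n : ℕ) (j : Fin m) :
    (1 - MvPowerSeries.X j : MvPowerSeries (Fin m) ℚ) ^ n * G m n j = 1 := by
  induction n with
  | zero => simp [G_zero]
  | succ n ih =>
    have : (1 - MvPowerSeries.X j : MvPowerSeries (Fin m) ℚ) ^ (n + 1) * G m (n+1) j
        = (1 - MvPowerSeries.X j : MvPowerSeries (Fin m) ℚ) ^ n
          * ((1 - MvPowerSeries.X j) * G m (n+1) j) := by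
      ring
    rw [this, one_sub_X_mul_G, ih]

lemma inv_pow_eq_G (m n : ℕ) (j : Fin m) :
    ((1 - MvPowerSeries.X j : MvPowerSeries (Fin m) ℚ)⁻¹) ^ n = G m n j := by
  have hc : MvPowerSeries.constantCoeff (1 - MvPowerSeries.X j : MvPowerSeries (Fin m) ℚ) ≠ 0 := by
    rw [map_sub, map_one, MvPowerSeries.constantCoeff_X]
    norm_num
  have hinv : (1 - MvPowerSeries.X j : MvPowerSeries (Fin m) ℚ)⁻¹
      * (1 - MvPowerSeries.X j) = 1 := MvPowerSeries.inv_mul_cancel _ hc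
  have h1 : ((1 - MvPowerSeries.X j : MvPowerSeries (Fin m) ℚ)⁻¹) ^ n
      * (1 - MvPowerSeries.X j) ^ n = 1 := by
    rw [← mul_pow, hinv, one_pow]
  calc ((1 - MvPowerSeries.X j : MvPowerSeries (Fin m) ℚ)⁻¹) ^ n
      = ((1 - MvPowerSeries.X j : MvPowerSeries (Fin m) ℚ)⁻¹) ^ n
        * ((1 - MvPowerSeries.X j) ^ n * G m n j) := by
        rw [one_sub_X_pow_mul_G, mul_one]
    _ = (((1 - MvPowerSeries.X j : MvPowerSeries (Fin m) ℚ)⁻¹) ^ n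
        * (1 - MvPowerSeries.X j) ^ n) * G m n j := by ring
    _ = G m n j := by rw [h1, one_mul]

lemma coeff_prod_G (m n : ℕ) (s : Finset (Fin m)) (d : Fin m →₀ ℕ) :
    MvPowerSeries.coeff d (∏ j ∈ s, G m n j)
      = if ∀ i ∉ s, d i = 0 then (∏ j ∈ s, (Nat.multichoose n (d j) : ℚ)) else 0 := by
  classical
  induction s using Finset.induction_on generalizing d with
  | empty =>
    simp only [Finset.prod_empty, MvPowerSeries.coeff_one]
    by_cases hd : d = 0
    · rw [if_pos hd, if_pos (by intro i _; rw [hd]; rfl)]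
    · rw [if_neg hd, if_neg ?_]
      intro hcon
      exact hd (Finsupp.ext fun i => hcon i (by simp))
  | @insert a s ha ih =>
    rw [Finset.prod_insert ha, MvPowerSeries.coeff_mul]
    set p0 : Fin m →₀ ℕ := Finsupp.single a (d a) with hp0
    set q0 : Fin m →₀ ℕ := d - Finsupp.single a (d a) with hq0
    have hle : p0 ≤ d := by
      rw [hp0, Finsupp.single_le_iff]
    have hpq : p0 + q0 = d := add_tsub_cancel_of_le hle
    have hq0a : q0 a = 0 := by
      rw [hq0, Finsupp.tsub_apply, Finsupp.single_eq_same]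
      omega
    have hq0i : ∀ i, i ≠ a → q0 i = d i := by
      intro i hi
      rw [hq0, Finsupp.tsub_apply, Finsupp.single_eq_of_ne hi]
      omega
    rw [Finset.sum_eq_single_of_mem (p0, q0) (by rw [Finset.HasAntidiagonal.mem_antidiagonal]; exact hpq) ?side]
    case side =>
      rintro ⟨p, q⟩ hmem hne
      rw [Finset.HasAntidiagonal.mem_antidiagonal] at hmem
      by_contra hcon
      have hp : MvPowerSeries.coeff p (G m n a) ≠ 0 := fun h => hcon (by rw [h, zero_mul])
      have hq : MvPowerSeries.coeff q (∏ j ∈ s, G m n j) ≠ 0 :=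
        fun h => hcon (by rw [h, mul_zero])
      rw [coeff_G m n a p] at hp
      have hpsup : ∀ i, i ≠ a → p i = 0 := by
        by_contra hcon2
        rw [if_neg hcon2] at hp
        exact hp rfl
      rw [ih] at hq
      have hqsup : ∀ i ∉ s, q i = 0 := by
        by_contra hcon2
        rw [if_neg hcon2] at hq
        exact hq rfl
      have hqa : q a = 0 := hqsup a ha
      have hpa : p a = d a := by
        have := DFunLike.congr_fun hmem a
        simp only [Finsupp.add_apply] at this
        omega
      have hpeq : p = p0 := by
        ext i
        by_cases hia : i = a
        · rw [hia, hpa, hp0, Finsupp.single_eq_same]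
        · rw [hpsup i hia, hp0, Finsupp.single_eq_of_ne hia]
      have hqeq : q = q0 := by
        have : p0 + q = d := by rw [← hpeq]; exact hmem
        have h2 : p0 + q0 = d := hpq
        have := add_left_cancel (this.trans h2.symm)
        exact this
      exact hne (by rw [hpeq, hqeq])
    rw [coeff_G m n a p0]
    have hp0sup : ∀ i, i ≠ a → p0 i = 0 := by
      intro i hi
      rw [hp0, Finsupp.single_eq_of_ne hi]
    rw [if_pos hp0sup]
    have hp0a : p0 a = d a := by rw [hp0, Finsupp.single_eq_same]
    rw [hp0a, ih]
    have hcond : (∀ i ∉ s, q0 i = 0) ↔ (∀ i ∉ insert a s, d i = 0) := by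
      constructor
      · intro h i hi
        simp only [Finset.mem_insert, not_or] at hi
        rw [← hq0i i hi.1]
        exact h i hi.2
      · intro h i hi
        by_cases hia : i = a
        · rw [hia]; exact hq0a
        · rw [hq0i i hia]
          exact h i (by simp [Finset.mem_insert, hia, hi])
    by_cases hc : ∀ i ∉ insert a s, d i = 0
    · rw [if_pos (hcond.mpr hc), if_pos hc, Finset.prod_insert ha]
      congr 1
      apply Finset.prod_congr rfl
      intro j hj
      rw [hq0i j (fun h => ha (h ▸ hj))]
    · rw [if_neg (fun h => hc (hcond.mp h)), if_neg hc, mul_zero]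

end SGF

/-- Coefficient-wise form of
`Σ_{ℓ(λ) ≤ n} g_λ(z_1,…,z_m) = Π_{i=1}^m (1 - z_i)^{-n}`: the coefficient of the
monomial with exponents `e` on the right equals the number of plane partitions with at
most `n` rows and entries at most `m` whose entry `j` occupies exactly `e j` columns
(summing `g_λ` over all λ with at most `n` parts amounts to summing the monomial
`Π_j z_j^{c_j(π)}` over all such plane partitions). -/
theorem sum_groth_gen_fun (n m : ℕ) (e : Fin m →₀ ℕ) :
    MvPowerSeries.coeff e
      (∏ j : Fin m, ((1 - MvPowerSeries.X j : MvPowerSeries (Fin m) ℚ)⁻¹) ^ n) =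
    Nat.card {π : PlanePartition // π.RowsLE n ∧ π.EntriesLE m ∧
      ∀ j : Fin m, π.colCount ((j : ℕ) + 1) = e j} := by
  have hprod : (∏ j : Fin m, ((1 - MvPowerSeries.X j : MvPowerSeries (Fin m) ℚ)⁻¹) ^ n)
      = ∏ j : Fin m, SGF.G m n j :=
    Finset.prod_congr rfl (fun j _ => SGF.inv_pow_eq_G m n j)
  rw [hprod, SGF.coeff_prod_G m n Finset.univ e,
    if_pos (fun i hi => absurd (Finset.mem_univ i) hi), SGF.card_PP n m e,
    Nat.cast_prod]
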